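/- arXiv:2005.01915 — 4 statements merged into one kernel-verified Lean document; each statement's English description precedes it below -/
import Mathlib

section
/- Let $\theta$ be an algebraic number with $\theta^n = a$ for a nonzero integer $a$, and suppose $|a| = \prod_{j=1}^{n-1} a_j^j$ where the $a_j$ are squarefree and pairwise coprime. For $0 \leq m \leq n-1$, let $C_m = \prod_{j=1}^{n-1} a_j^{\lfloor jm/n \rfloor}$. Then $\theta^m / C_m$ is an algebraic integer; indeed it is a root of the monic polynomial $x^n - \mathrm{sgn}(a)^m \prod_{j=1}^{n-1} a_j^{\,jm - n\lfloor jm/n \rfloor}$. -/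
theorem theta_pow_div_C_isIntegral (n : ℕ) (hn : 1 ≤ n) (a : ℤ) (ha : a ≠ 0)
    (θ : ℂ) (hθ : θ ^ n = (a : ℂ))
    (aa : ℕ → ℤ) (hsq : ∀ j ∈ Finset.Ico 1 n, Squarefree (aa j))
    (hcop : ∀ i ∈ Finset.Ico 1 n, ∀ j ∈ Finset.Ico 1 n, i ≠ j → IsCoprime (aa i) (aa j))
    (hfac : |a| = ∏ j ∈ Finset.Ico 1 n, aa j ^ j)
    (m : ℕ) (hm : m ≤ n - 1)
    (Cm : ℤ) (hCm : Cm = ∏ j ∈ Finset.Ico 1 n, aa j ^ (j * m / n)) :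
    IsIntegral ℤ (θ ^ m / (Cm : ℂ)) ∧
      (θ ^ m / (Cm : ℂ)) ^ n =
        (Int.sign a : ℂ) ^ m * ∏ j ∈ Finset.Ico 1 n, (aa j : ℂ) ^ (j * m - n * (j * m / n)) := by
  have haa : ∀ j ∈ Finset.Ico 1 n, aa j ≠ 0 := by
    intro j hj hz
    have h1 : (1:ℕ) ≤ j := (Finset.mem_Ico.mp hj).1
    have : |a| = 0 := by
      rw [hfac]
      exact Finset.prod_eq_zero hj (by rw [hz]; exact zero_pow (by omega))
    exact ha (abs_eq_zero.mp this)
  have hC0 : Cm ≠ 0 := by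
    rw [hCm]
    exact Finset.prod_ne_zero_iff.mpr fun j hj => pow_ne_zero _ (haa j hj)
  have hC0' : (Cm : ℂ) ≠ 0 := by exact_mod_cast hC0
  have haC : ∀ j ∈ Finset.Ico 1 n, (aa j : ℂ) ≠ 0 := fun j hj => by
    exact_mod_cast haa j hj
  -- key computation
  have hsign : ((Int.sign a : ℤ) : ℂ) * ((|a| : ℤ) : ℂ) = (a : ℂ) := by
    exact_mod_cast congrArg (fun x : ℤ => (x : ℂ)) (Int.sign_mul_abs a)
  have key : (θ ^ m / (Cm : ℂ)) ^ n =
      (Int.sign a : ℂ) ^ m * ∏ j ∈ Finset.Ico 1 n, (aa j : ℂ) ^ (j * m - n * (j * m / n)) := by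
    rw [div_pow, ← pow_mul, mul_comm m n, pow_mul, hθ]
    rw [← hsign]
    have habs : ((|a| : ℤ) : ℂ) = ∏ j ∈ Finset.Ico 1 n, (aa j : ℂ) ^ j := by
      rw [hfac]; push_cast; ring
    rw [habs, hCm]
    push_cast
    rw [mul_pow, ← Finset.prod_pow, ← Finset.prod_pow]
    rw [div_eq_iff (by
      exact Finset.prod_ne_zero_iff.mpr fun j hj => pow_ne_zero _ (pow_ne_zero _ (haC j hj)))]
    rw [mul_assoc, ← Finset.prod_mul_distrib]
    congr 1
    apply Finset.prod_congr rfl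
    intro j hj
    rw [← pow_mul, ← pow_mul, ← pow_add]
    congr 1
    have hle : n * (j * m / n) ≤ j * m := by
      rw [mul_comm]; exact Nat.div_mul_le_self _ _
    rw [mul_comm (j * m / n) n]
    exact (Nat.sub_add_cancel hle).symm
  refine ⟨?_, key⟩
  refine ⟨Polynomial.X ^ n - Polynomial.C
    (Int.sign a ^ m * ∏ j ∈ Finset.Ico 1 n, aa j ^ (j * m - n * (j * m / n))),
    Polynomial.monic_X_pow_sub_C _ (by omega), ?_⟩
  have : ((Int.sign a ^ m * ∏ j ∈ Finset.Ico 1 n, aa j ^ (j * m - n * (j * m / n)) : ℤ) : ℂ)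
      = (θ ^ m / (Cm : ℂ)) ^ n := by
    rw [key]; push_cast; ring
  simp only [Polynomial.eval₂_sub, Polynomial.eval₂_X_pow, algebraMap_int_eq,
    Polynomial.eval₂_C, Int.coe_castRingHom]
  rw [this, sub_self]
end

section
/- Let $K = \mathbb{Q}(\theta)$ where $\theta$ is a root of an irreducible polynomial $x^n - a \in \mathbb{Z}[x]$. Let $p$ be a prime with $p^s \| n$ ($s \geq 1$), $p \nmid a$, and suppose $r = v_p(a^{p-1}-1) - 1 \geq 1$. Fix $k$ with $1 \leq k \leq \min\{r,s\}$, let $b'$ be an integer with $ab' \equiv 1 \pmod{p^{k+1}}$, set $a' = (b')^{p^{s-k-1}}$ if $k < s$ and $a' = b'$ if $k = s$, and let $n' = n/p^k$. Then the element $\eta_k = \sum_{j=0}^{p^k - 1} (a' \theta^{n'})^j$ satisfies $\eta_k / p^k$ is an algebraic integer. -/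
open Polynomial in
lemma aux_integral (γ : ℂ) (N : ℕ) (hN : 0 < N) (d : ℕ → ℤ)
    (h : γ ^ N = ∑ j ∈ Finset.range N, (d j : ℂ) * γ ^ (N - 1 - j)) :
    IsIntegral ℤ γ := by
  refine ⟨X ^ N - ∑ j ∈ Finset.range N, C (d j) * X ^ (N - 1 - j), ?_, ?_⟩
  · apply monic_X_pow_sub
    refine lt_of_le_of_lt (degree_sum_le _ _) ?_
    rw [Finset.sup_lt_iff (by exact_mod_cast WithBot.bot_lt_coe N)]
    intro j hj
    refine lt_of_le_of_lt (degree_C_mul_X_pow_le _ _) ?_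
    exact_mod_cast (by omega : N - 1 - j < N)
  · rw [eval₂_sub, eval₂_pow, eval₂_X, eval₂_finset_sum]
    simp only [eval₂_mul, eval₂_C, eval₂_pow, eval₂_X]
    simp only [eq_intCast]
    rw [h]
    ring

lemma aux_dvd (p k : ℕ) (hp : p.Prime) (m : ℤ) (hm : (p:ℤ) ∣ m) (i : ℕ)
    (hi1 : 1 ≤ i) (hi2 : i ≤ p ^ k) :
    (p:ℤ)^k ∣ (Nat.choose (p^k) i : ℤ) * m ^ (i - 1) := by
  set t := i.factorization p with ht
  have hi0 : i ≠ 0 := by omega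
  have hpt : p ^ t ∣ i := Nat.ordProj_dvd i p
  have htk : t ≤ k := by
    have := Nat.le_of_dvd (by omega) hpt
    exact (Nat.pow_le_pow_iff_right hp.one_lt).mp (this.trans hi2)
  have hti : t ≤ i - 1 := by
    have h1 : t < p ^ t := Nat.lt_pow_self hp.one_lt
    have := Nat.le_of_dvd (by omega) hpt
    omega
  have hkey : p ^ k ∣ Nat.choose (p^k) i * i := by
    have h2 := Nat.add_one_mul_choose_eq (p^k - 1) (i - 1)
    have hNN : p ^ k - 1 + 1 = p ^ k := Nat.succ_pred_eq_of_pos (pow_pos hp.pos k)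
    have hii : i - 1 + 1 = i := by omega
    rw [hNN, hii] at h2
    exact ⟨Nat.choose (p^k - 1) (i - 1), by rw [← h2]⟩
  have hcop : Nat.Coprime p (i / p ^ t) := Nat.coprime_ordCompl hp hi0
  have hchoose : p ^ (k - t) ∣ Nat.choose (p^k) i := by
    obtain ⟨u, hu⟩ := hpt
    have hu' : i = p ^ t * u := hu
    have hcop' : Nat.Coprime (p ^ (k - t)) u := by
      have : u = i / p ^ t := by
        rw [hu']; exact (Nat.mul_div_cancel_left u (pow_pos hp.pos t)).symm
      rw [this]
      exact Nat.Coprime.pow_left _ hcop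
    have hdvd : p ^ (k - t) * p ^ t ∣ Nat.choose (p^k) i * (p ^ t * u) := by
      rw [← pow_add]
      have h5 : k - t + t = k := by omega
      rw [h5, ← hu']
      exact hkey
    have h3 : p ^ (k - t) ∣ Nat.choose (p^k) i * u := by
      have h4 : p ^ t * (p ^ (k-t) * 1) ∣ p ^ t * (Nat.choose (p^k) i * u) := by
        calc p ^ t * (p ^ (k-t) * 1) = p ^ (k - t) * p ^ t := by ring
        _ ∣ Nat.choose (p^k) i * (p ^ t * u) := hdvd
        _ = p ^ t * (Nat.choose (p^k) i * u) := by ring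
      have := (mul_dvd_mul_iff_left (a := p ^ t) (pow_ne_zero t hp.pos.ne')).mp h4
      simpa using this
    exact (Nat.Coprime.dvd_of_dvd_mul_right hcop' h3)
  have hmt : (p:ℤ) ^ t ∣ m ^ (i - 1) := by
    calc (p:ℤ) ^ t ∣ m ^ t := pow_dvd_pow_of_dvd hm t
    _ ∣ m ^ (i - 1) := pow_dvd_pow m hti
  have hsplit : (p:ℤ)^k = (p:ℤ)^(k-t) * (p:ℤ)^t := by
    rw [← pow_add]; congr 1; omega
  rw [hsplit]
  exact mul_dvd_mul (by exact_mod_cast Int.natCast_dvd_natCast.mpr hchoose) hmt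

open Polynomial in
theorem eta_div_pk_isIntegral (n : ℕ) (a : ℤ) (θ : ℂ) (hθ : θ ^ n = (a : ℂ))
    (hirr : Irreducible ((X : ℚ[X]) ^ n - C (a : ℚ)))
    (p s : ℕ) (hp : p.Prime) (hs : 1 ≤ s) (hps : p ^ s ∣ n) (hps' : ¬ p ^ (s + 1) ∣ n)
    (ha : ¬ (p : ℤ) ∣ a)
    (r : ℕ) (hr : r = padicValInt p (a ^ (p - 1) - 1) - 1) (hr1 : 1 ≤ r)
    (k : ℕ) (hk1 : 1 ≤ k) (hk2 : k ≤ min r s)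
    (b' : ℤ) (hb' : a * b' ≡ 1 [ZMOD (p : ℤ) ^ (k + 1)])
    (a' : ℤ) (ha' : a' = if k < s then b' ^ p ^ (s - k - 1) else b')
    (n' : ℕ) (hn' : n' = n / p ^ k) :
    IsIntegral ℤ ((∑ j ∈ Finset.range (p ^ k), ((a' : ℂ) * θ ^ n') ^ j) / (p : ℂ) ^ k) := by
  haveI : Fact p.Prime := ⟨hp⟩
  have hks : k ≤ s := hk2.trans (min_le_right r s)
  have hkr : k ≤ r := hk2.trans (min_le_left r s)
  set N := p ^ k with hN
  have hN0 : 0 < N := pow_pos hp.pos k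
  have hNn : N ∣ n := (pow_dvd_pow p hks).trans hps
  have hn'N : n' * N = n := by rw [hn']; exact Nat.div_mul_cancel hNn
  set β : ℂ := (a' : ℂ) * θ ^ n' with hβdef
  set c : ℤ := a' ^ N * a with hc
  have hβN : β ^ N = (c : ℂ) := by
    rw [hβdef, mul_pow, ← pow_mul, hn'N, hθ, hc]; push_cast; ring
  have hpC : ((p:ℂ)) ≠ 0 := Nat.cast_ne_zero.mpr hp.pos.ne'
  have hpkC : ((p:ℂ))^k ≠ 0 := pow_ne_zero k hpC
  -- divisibility: p^(k+1) ∣ c - 1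
  have hd1 : ((p:ℤ))^(k+1) ∣ a * b' - 1 := dvd_sub_comm.mp hb'.dvd
  have h2 : ((p:ℤ))^(k+1) ∣ a ^ (p - 1) - 1 := by
    by_cases h0 : a ^ (p - 1) - 1 = 0
    · simp [h0]
    · have hv := padicValInt_dvd (p := p) (a ^ (p-1) - 1)
      have hvge : k + 1 ≤ padicValInt p (a ^ (p-1) - 1) := by omega
      exact (pow_dvd_pow _ hvge).trans hv
  have hab : ((p:ℤ))^(k+1) ∣ (a*b')^(p-1) - 1 :=
    hd1.trans (by simpa using sub_dvd_pow_sub_pow (a*b') 1 (p-1))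
  have h3 : ((p:ℤ))^(k+1) ∣ b' ^ (p-1) - 1 := by
    have key : b' ^ (p-1) - 1 = b' ^ (p-1) * (1 - a ^ (p-1)) + ((a*b')^(p-1) - 1) := by ring
    rw [key]
    exact dvd_add (Dvd.dvd.mul_left (dvd_sub_comm.mp h2) _) hab
  have hcong : ((p:ℤ))^(k+1) ∣ c - 1 := by
    have hexists : ∃ e : ℕ, 1 ≤ e ∧ (p-1) ∣ e - 1 ∧ a' ^ N = b' ^ e := by
      by_cases hlt : k < s
      · refine ⟨p ^ (s-1), Nat.one_le_pow _ _ hp.pos, ?_, ?_⟩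
        · simpa using Nat.sub_dvd_pow_sub_pow p 1 (s-1)
        · rw [ha', if_pos hlt, hN, ← pow_mul, ← pow_add]
          congr 2
          omega
      · refine ⟨p ^ s, Nat.one_le_pow _ _ hp.pos, ?_, ?_⟩
        · simpa using Nat.sub_dvd_pow_sub_pow p 1 s
        · rw [ha', if_neg hlt, hN]
          congr 2
          omega
    obtain ⟨e, he1, ⟨t, ht⟩, hae⟩ := hexists
    have hesplit : e = 1 + (p-1) * t := by omega
    have hsplit : c - 1 = (b'^(p-1))^t * (a * b' - 1) + ((b'^(p-1))^t - 1) := by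
      rw [hc, hae, hesplit, pow_add, pow_mul, pow_one]; ring
    rw [hsplit]
    refine dvd_add (Dvd.dvd.mul_left hd1 _) ?_
    exact h3.trans (by simpa using sub_dvd_pow_sub_pow (b'^(p-1)) 1 t)
  obtain ⟨m', hm'⟩ := hcong
  set m : ℤ := p * m' with hm
  have hc1 : c - 1 = (p:ℤ)^k * m := by rw [hm', hm, pow_succ]; ring
  have hpm : (p:ℤ) ∣ m := ⟨m', rfl⟩
  by_cases hβ1 : β = 1
  · rw [hβ1]
    simp only [one_pow, Finset.sum_const, Finset.card_range, nsmul_eq_mul, mul_one]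
    rw [show ((N : ℂ)) = (p:ℂ)^k by rw [hN]; push_cast; ring]
    rw [div_self hpkC]
    exact isIntegral_one
  · rw [geom_sum_eq hβ1, hβN]
    by_cases hm0 : m = 0
    · have hc0 : c = 1 := by rw [hm0, mul_zero] at hc1; omega
      rw [show ((c:ℂ)) = 1 by exact_mod_cast congrArg (Int.cast : ℤ → ℂ) hc0]
      simp only [sub_self, zero_div]
      exact isIntegral_zero
    · set δ : ℂ := β - 1 with hδ
      have hδ0 : δ ≠ 0 := sub_ne_zero.mpr hβ1
      have hcc : ((c:ℂ) - 1) = (p:ℂ)^k * (m:ℂ) := by exact_mod_cast congrArg (Int.cast : ℤ → ℂ) hc1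
      have hE : ((c:ℂ) - 1)/δ/(p:ℂ)^k = (m:ℂ)/δ := by
        rw [hcc]; field_simp
      rw [hE]
      set γ : ℂ := (m:ℂ)/δ with hγ
      set d : ℕ → ℤ := fun j => ((N.choose (j+1) : ℤ) * m ^ j) / (p:ℤ)^k with hd
      apply aux_integral γ N hN0 d
      have hγδ : γ * δ = (m:ℂ) := div_mul_cancel₀ _ hδ0
      have hbin : ∑ j ∈ Finset.range N, (N.choose (j+1) : ℂ) * δ ^ (j+1) = (p:ℂ)^k * (m:ℂ) := by
        have h4 := add_pow δ 1 N
        rw [Finset.sum_range_succ'] at h4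
        simp only [one_pow, mul_one, pow_zero, Nat.choose_zero_right, Nat.cast_one, one_mul] at h4
        have h5 : (δ + 1) ^ N = (c : ℂ) := by
          rw [show δ + 1 = β from by rw [hδ]; ring, hβN]
        rw [h5] at h4
        calc ∑ j ∈ Finset.range N, (N.choose (j+1):ℂ) * δ^(j+1)
            = ∑ j ∈ Finset.range N, δ^(j+1) * (N.choose (j+1):ℂ) := by
              exact Finset.sum_congr rfl (fun j _ => by ring)
          _ = (c:ℂ) - 1 := eq_sub_of_add_eq h4.symm
          _ = (p:ℂ)^k * (m:ℂ) := hcc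
      apply mul_left_cancel₀ (mul_ne_zero hpkC (pow_ne_zero N hδ0))
      have hterm : ∀ j ∈ Finset.range N,
          ((p:ℂ)^k * δ^N) * ((d j:ℂ) * γ^(N-1-j)) = (N.choose (j+1):ℂ) * (m:ℂ)^(N-1) * δ^(j+1) := by
        intro j hj
        have hj' := Finset.mem_range.mp hj
        have hdj : ((p:ℤ)^k) * d j = (N.choose (j+1) : ℤ) * m ^ j := by
          rw [hd]
          exact Int.mul_ediv_cancel'
            (by simpa using aux_dvd p k hp m hpm (j+1) (by omega) (by omega))
        have hdjC : ((p:ℂ)^k) * (d j : ℂ) = (N.choose (j+1) : ℂ) * (m:ℂ) ^ j := by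
          exact_mod_cast congrArg (Int.cast : ℤ → ℂ) hdj
        have hδsplit : δ^N = δ^(N-1-j) * δ^(j+1) := by rw [← pow_add]; congr 1; omega
        have hγδe : γ^(N-1-j) * δ^(N-1-j) = (m:ℂ)^(N-1-j) := by rw [← mul_pow, hγδ]
        calc ((p:ℂ)^k * δ^N) * ((d j:ℂ) * γ^(N-1-j))
            = ((p:ℂ)^k * (d j:ℂ)) * (γ^(N-1-j) * δ^(N-1-j)) * δ^(j+1) := by
              rw [hδsplit]; ring
          _ = ((N.choose (j+1):ℂ) * (m:ℂ)^j) * (m:ℂ)^(N-1-j) * δ^(j+1) := by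
              rw [hdjC, hγδe]
          _ = (N.choose (j+1):ℂ) * (m:ℂ)^(N-1) * δ^(j+1) := by
              have hmm : (m:ℂ)^j * (m:ℂ)^(N-1-j) = (m:ℂ)^(N-1) := by
                rw [← pow_add]; congr 1; omega
              rw [← hmm]; ring
      calc ((p:ℂ)^k * δ^N) * γ^N = (p:ℂ)^k * ((γ*δ)^N) := by rw [mul_pow]; ring
        _ = (p:ℂ)^k * (m:ℂ)^N := by rw [hγδ]
        _ = (m:ℂ)^(N-1) * ((p:ℂ)^k * (m:ℂ)) := by
            have hmN : (m:ℂ)^N = (m:ℂ)^(N-1) * (m:ℂ) := by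
              rw [← pow_succ]; congr 1; omega
            rw [hmN]; ring
        _ = (m:ℂ)^(N-1) * (∑ j ∈ Finset.range N, (N.choose (j+1):ℂ) * δ^(j+1)) := by rw [hbin]
        _ = ∑ j ∈ Finset.range N, (N.choose (j+1):ℂ) * (m:ℂ)^(N-1) * δ^(j+1) := by
            rw [Finset.mul_sum]
            exact Finset.sum_congr rfl (fun j _ => by ring)
        _ = ∑ j ∈ Finset.range N, ((p:ℂ)^k * δ^N) * ((d j:ℂ) * γ^(N-1-j)) :=
            (Finset.sum_congr rfl hterm).symm
        _ = ((p:ℂ)^k * δ^N) * ∑ j ∈ Finset.range N, (d j:ℂ) * γ^(N-1-j) := by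
            rw [Finset.mul_sum]
end

section
/- With notation as in Lemma 1 of the paper: let $\eta_k = \sum_{j=0}^{p^k-1}(a'\theta^{n'})^j$ where $\theta^{n'p^k} = a$ and $a(a')^{p^k} \neq 1$. Then $\eta_k$ satisfies the monic polynomial identity $\eta_k^{p^k} = \sum_{j=1}^{p^k} \binom{p^k}{j} (a(a')^{p^k} - 1)^{j-1} \eta_k^{p^k - j}$. -/
theorem eta_monic_identity (p k n' : ℕ) (hp : p.Prime) (a a' : ℤ) (θ : ℂ)
    (hθ : θ ^ (n' * p ^ k) = (a : ℂ)) (hne : a * a' ^ p ^ k ≠ 1)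
    (η : ℂ) (hη : η = ∑ j ∈ Finset.range (p ^ k), ((a' : ℂ) * θ ^ n') ^ j) :
    η ^ p ^ k = ∑ j ∈ Finset.Icc 1 (p ^ k),
      ((p ^ k).choose j : ℂ) * ((a : ℂ) * (a' : ℂ) ^ p ^ k - 1) ^ (j - 1) * η ^ (p ^ k - j) := by
  set m := p ^ k with hm
  have hm1 : 1 ≤ m := Nat.one_le_pow _ _ hp.pos
  set c : ℂ := (a : ℂ) * (a' : ℂ) ^ m with hc
  have hc0 : c - 1 ≠ 0 := by
    rw [sub_ne_zero]
    intro h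
    apply hne
    have h2 : ((a * a' ^ p ^ k : ℤ) : ℂ) = ((1 : ℤ) : ℂ) := by push_cast; exact h
    exact_mod_cast h2
  set x : ℂ := (a' : ℂ) * θ ^ n' with hx
  have hxm : x ^ m = c := by
    rw [hx, mul_pow, ← pow_mul, hθ, hc, mul_comm]
  have hgeom : η * (x - 1) = c - 1 := by
    rw [hη, geom_sum_mul, hxm]
  have hxeta : x * η = η + (c - 1) := by linear_combination hgeom
  have key : (c - 1) * η ^ m = ∑ j ∈ Finset.range m,
      η ^ j * (c - 1) ^ (m - j) * ((m.choose j : ℕ) : ℂ) := by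
    have h1 : (η + (c - 1)) ^ m = c * η ^ m := by
      rw [← hxeta, mul_pow, hxm]
    have h2 := add_pow η (c - 1) m
    rw [Finset.sum_range_succ] at h2
    simp only [Nat.sub_self, pow_zero, Nat.choose_self, Nat.cast_one, mul_one, one_mul] at h2
    linear_combination h2 - h1
  apply mul_left_cancel₀ hc0
  rw [key, Finset.mul_sum, ← Finset.Ico_add_one_right_eq_Icc, Finset.sum_Ico_eq_sum_range]
  rw [← Finset.sum_range_reflect]
  apply Finset.sum_congr rfl
  intro i hi
  rw [Finset.mem_range] at hi
  have e1 : m - (m - 1 - i) = i + 1 := by omega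
  have e2 : m.choose (m - 1 - i) = m.choose (i + 1) := by
    rw [← Nat.choose_symm (by omega : i + 1 ≤ m)]
    congr 1; omega
  have e3 : m - (1 + i) = m - 1 - i := by omega
  have e4 : 1 + i - 1 = i := by omega
  rw [e1, e2, e3, e4]
  ring_nf
end

section
/- Let $K = \mathbb{Q}(\theta)$ with $\theta$ a root of irreducible $x^n - a \in \mathbb{Z}[x]$, $p$ a prime with $p^s \| n$, $p \nmid a$, and $r = v_p(a^{p-1}-1)-1 \geq 1$. For $0 \leq m \leq n-1$, let $k_m$ be the largest integer $\leq \min\{r,s\}$ with $m = n - n/p^{k_m} + j_m$, $j_m \geq 0$. Write $|a| = \prod_j a_j^j$ with $a_j$ squarefree and pairwise coprime, $C_m = \prod_j a_j^{\lfloor jm/n\rfloor}$. Let $b'_m$ satisfy $a b'_m \equiv 1 \pmod{p^{k_m+1}}$, set $a'_m = (b'_m)^{p^{s-k_m-1}}$ if $k_m < s$, else $a'_m = b'_m$, let $n'_m = n/p^{k_m}$, and let $w_m$ satisfy $w_m C_m (a'_m)^{p^{k_m}-1} \equiv 1 \pmod{p^{k_m}}$. Define $\delta_m = w_m C_m \theta^{j_m}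 \sum_{j=0}^{p^{k_m}-2}(a'_m \theta^{n'_m})^j$ if $k_m > 0$ and $\delta_m = 0$ if $k_m = 0$. Then $(\theta^m + \delta_m)/(p^{k_m} C_m)$ is an algebraic integer. -/
open Polynomial

theorem isIntegral_of_forall_mem_valuationSubring' {K : Type*} [Field K] {x : K}
    (h : ∀ V : ValuationSubring K, x ∈ V) : IsIntegral ℤ x := by
  by_contra hx
  have hx0 : x ≠ 0 := fun h0 => hx (h0 ▸ isIntegral_zero)
  set S : Subring K := (Algebra.adjoin ℤ {x⁻¹}).toSubring with hS
  have hyS : x⁻¹ ∈ S := Algebra.self_mem_adjoin_singleton ℤ _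
  have hxS : (⟨x⁻¹, hyS⟩ : S) ∈ nonunits S := by
    intro hu
    obtain ⟨z, hz⟩ := isUnit_iff_exists_inv.mp hu
    have hzx : (z : K) = x := by
      have h1 : x⁻¹ * (z : K) = 1 := congrArg Subtype.val hz
      field_simp at h1
      linear_combination h1
    have hxmem : x ∈ Algebra.adjoin ℤ ({x⁻¹} : Set K) := by
      have h5 := z.2
      rw [hzx] at h5
      exact Subalgebra.mem_toSubring.mp h5
    rw [Algebra.adjoin_singleton_eq_range_aeval, AlgHom.mem_range] at hxmem
    obtain ⟨p, hp⟩ := hxmem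
    apply hx
    set d := p.natDegree with hd
    have h6 : (aeval x⁻¹) p = ∑ i ∈ Finset.range (d+1), (p.coeff i : K) * (x⁻¹) ^ i := by
      rw [aeval_def, eval₂_eq_sum_range]
      simp [eq_intCast, hd]
    have hxp : x = ∑ i ∈ Finset.range (d+1), (p.coeff i : K) * (x⁻¹) ^ i := hp.symm.trans h6
    have key : x ^ (d+1) = ∑ i ∈ Finset.range (d+1), (p.coeff i : K) * x ^ (d - i) := by
      have h2 : x ^ d * x = x ^ d * ∑ i ∈ Finset.range (d+1), (p.coeff i : K) * (x⁻¹) ^ i :=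
        congrArg (fun t => x ^ d * t) hxp
      rw [pow_succ, h2, Finset.mul_sum]
      refine Finset.sum_congr rfl (fun i hi => ?_)
      have hid : i ≤ d := Nat.lt_succ_iff.mp (Finset.mem_range.mp hi)
      have h3 : x ^ d * (x⁻¹) ^ i = x ^ (d - i) := by
        rw [pow_sub₀ x hx0 hid, inv_pow]
      rw [← h3]; ring
    refine ⟨X ^ (d+1) - ∑ i ∈ Finset.range (d+1), C (p.coeff i) * X ^ (d - i), ?_, ?_⟩
    · apply monic_X_pow_sub
      refine lt_of_le_of_lt (degree_sum_le _ _) ?_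
      rw [Finset.sup_lt_iff (by exact_mod_cast WithBot.bot_lt_coe (d+1))]
      intro i hi
      refine lt_of_le_of_lt (degree_C_mul_X_pow_le _ _) ?_
      exact_mod_cast Nat.lt_succ_of_le (Nat.sub_le _ _)
    · have h4 : (aeval x) (X ^ (d+1) - ∑ i ∈ Finset.range (d+1), C (p.coeff i) * X ^ (d - i))
          = x ^ (d+1) - ∑ i ∈ Finset.range (d+1), (p.coeff i : K) * x ^ (d - i) := by
        simp [eq_intCast]
      have h7 : (aeval x) (X ^ (d+1) - ∑ i ∈ Finset.range (d+1), C (p.coeff i) * X ^ (d - i)) = 0 := by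
        rw [h4, key, sub_self]
      simpa [aeval_def] using h7
  obtain ⟨M, hM, hmem⟩ := exists_max_ideal_of_mem_nonunits hxS
  haveI := hM.isPrime
  set A := LocalSubring.ofPrime S M with hA
  obtain ⟨V, hV⟩ := A.exists_le_valuationSubring
  have hxV : x ∈ V.toSubring := h V
  have hyA : x⁻¹ ∈ A.toSubring := LocalSubring.le_ofPrime S M hyS
  have hynuA : ¬ IsUnit (⟨x⁻¹, hyA⟩ : A.toSubring) := by
    have h2 := IsLocalization.AtPrime.isUnit_to_map_iff (R := S) A.toSubring M (⟨x⁻¹, hyS⟩ : S)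
    intro hu
    have h3 : (⟨x⁻¹, hyS⟩ : S) ∈ M.primeCompl := h2.mp hu
    exact h3 hmem
  apply hynuA
  have hsub : A.toSubring ≤ V.toSubring := hV.1
  have hloc : IsLocalHom (Subring.inclusion hsub) := hV.2
  apply hloc.1
  exact isUnit_iff_exists_inv.mpr ⟨⟨x, hxV⟩, Subtype.ext (inv_mul_cancel₀ hx0)⟩

lemma sum_pow_mul_split {R : Type*} [CommRing R] (x : R) (a b : ℕ) :
    ∑ i ∈ Finset.range (a * b), x ^ i
      = (∑ i ∈ Finset.range a, x ^ i) * ∑ l ∈ Finset.range b, (x ^ a) ^ l := by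
  induction b with
  | zero => simp
  | succ b ih =>
    rw [Finset.sum_range_succ, Nat.mul_succ, Finset.sum_range_add, ih, mul_add]
    congr 1
    rw [mul_comm (∑ i ∈ Finset.range a, x ^ i) ((x ^ a) ^ b), Finset.mul_sum]
    refine Finset.sum_congr rfl fun i _ => ?_
    rw [← pow_mul, ← pow_add]

lemma geom_sum_sub_card {R : Type*} [CommRing R] (w : R) (q : ℕ) :
    ∑ l ∈ Finset.range q, w ^ l
      = (w - 1) * (∑ l ∈ Finset.range q, ∑ i ∈ Finset.range l, w ^ i) + (q : R) := by
  have h : ∀ l : ℕ, w ^ l = (w - 1) * ∑ i ∈ Finset.range l, w ^ i + 1 := by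
    intro l
    have h0 := geom_sum_mul w l
    linear_combination -h0
  calc ∑ l ∈ Finset.range q, w ^ l
      = ∑ l ∈ Finset.range q, ((w - 1) * ∑ i ∈ Finset.range l, w ^ i + 1) :=
        Finset.sum_congr rfl fun l _ => h l
    _ = (w - 1) * (∑ l ∈ Finset.range q, ∑ i ∈ Finset.range l, w ^ i) + (q : R) := by
        rw [Finset.sum_add_distrib, Finset.sum_const, Finset.card_range, ← Finset.mul_sum]
        simp

lemma val_geom_sum_le_of_le {K Γ : Type*} [Field K] [LinearOrderedCommGroupWithZero Γ]
    (v : Valuation K Γ) (p : ℕ) (u : K) (huint : IsIntegral ℤ u)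
    (hint : ∀ x : K, IsIntegral ℤ x → v x ≤ 1) (hcase : v (u - 1) ≤ v (p : K)) :
    ∀ j : ℕ, v (∑ i ∈ Finset.range (p ^ j), u ^ i) ≤ (v (p : K)) ^ j := by
  intro j
  induction j with
  | zero => simp
  | succ j ih =>
    rw [pow_succ, sum_pow_mul_split, map_mul, pow_succ]
    refine mul_le_mul' ih ?_
    set w : K := u ^ (p ^ j) with hw
    have hTw : ∑ l ∈ Finset.range p, (w : K) ^ l
        = (w - 1) * (∑ l ∈ Finset.range p, ∑ i ∈ Finset.range l, w ^ i) + (p : K) :=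
      geom_sum_sub_card w p
    rw [hTw]
    refine le_trans (v.map_add _ _) (max_le ?_ le_rfl)
    have h1 : v (w - 1) ≤ v (p : K) := by
      have h2 : w - 1 = (∑ i ∈ Finset.range (p ^ j), u ^ i) * (u - 1) := by
        rw [hw, ← geom_sum_mul]
      rw [h2, map_mul]
      calc v (∑ i ∈ Finset.range (p ^ j), u ^ i) * v (u - 1)
          ≤ 1 * v (p : K) := mul_le_mul'
            (hint _ ((integralClosure ℤ K).sum_mem fun i _ => huint.pow i)) hcase
        _ = v (p : K) := one_mul _
    have h3 : v (∑ l ∈ Finset.range p, ∑ i ∈ Finset.range l, w ^ i) ≤ 1 :=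
      hint _ ((integralClosure ℤ K).sum_mem fun l _ =>
        (integralClosure ℤ K).sum_mem fun i _ => (huint.pow _).pow i)
    rw [map_mul]
    calc v (w - 1) * v (∑ l ∈ Finset.range p, ∑ i ∈ Finset.range l, w ^ i)
        ≤ v (p : K) * 1 := mul_le_mul' h1 h3
      _ = v (p : K) := mul_one _

open Polynomial in
theorem theta_pow_add_delta_isIntegral (n : ℕ) (a : ℤ) (θ : ℂ) (hθ : θ ^ n = (a : ℂ))
    (hirr : Irreducible ((X : ℚ[X]) ^ n - C (a : ℚ)))
    (p s : ℕ) (hp : p.Prime) (hs : 1 ≤ s) (hps : p ^ s ∣ n) (hps' : ¬ p ^ (s + 1) ∣ n)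
    (ha : ¬ (p : ℤ) ∣ a)
    (r : ℕ) (hr : r = padicValInt p (a ^ (p - 1) - 1) - 1) (hr1 : 1 ≤ r)
    (aa : ℕ → ℤ) (hsq : ∀ j ∈ Finset.Ico 1 n, Squarefree (aa j))
    (hcop : ∀ i ∈ Finset.Ico 1 n, ∀ j ∈ Finset.Ico 1 n, i ≠ j → IsCoprime (aa i) (aa j))
    (hfac : |a| = ∏ j ∈ Finset.Ico 1 n, aa j ^ j)
    (m : ℕ) (hm : m ≤ n - 1)
    (km jm : ℕ) (hkm : km ≤ min r s) (hmj : m = n - n / p ^ km + jm)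
    (hmax : ∀ k ≤ min r s, n - n / p ^ k ≤ m → k ≤ km)
    (Cm : ℤ) (hCm : Cm = ∏ j ∈ Finset.Ico 1 n, aa j ^ (j * m / n))
    (b' : ℤ) (hb' : a * b' ≡ 1 [ZMOD (p : ℤ) ^ (km + 1)])
    (a' : ℤ) (ha' : a' = if km < s then b' ^ p ^ (s - km - 1) else b')
    (n'm : ℕ) (hn'm : n'm = n / p ^ km)
    (w : ℤ) (hw : w * Cm * a' ^ (p ^ km - 1) ≡ 1 [ZMOD (p : ℤ) ^ km])
    (δ : ℂ) (hδ : δ = if 0 < km then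
        (w : ℂ) * (Cm : ℂ) * θ ^ jm *
          ∑ j ∈ Finset.range (p ^ km - 1), ((a' : ℂ) * θ ^ n'm) ^ j
      else 0) :
    IsIntegral ℤ ((θ ^ m + δ) / ((p : ℂ) ^ km * (Cm : ℂ))) := by
  have ha0 : a ≠ 0 := fun h => ha (h ▸ dvd_zero _)
  have hn0 : 0 < n := by
    rcases Nat.eq_zero_or_pos n with h0 | h
    · exfalso
      rw [h0, pow_zero, ← C_1, ← C_sub] at hirr
      exact not_irreducible_C _ hirr
    · exact h
  have hθ0 : θ ≠ 0 := by
    intro h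
    rw [h, zero_pow hn0.ne'] at hθ
    exact ha0 (by exact_mod_cast hθ.symm)
  have hθint : IsIntegral ℤ θ :=
    ⟨X ^ n - C a, monic_X_pow_sub_C a hn0.ne', by
      rw [eval₂_sub, eval₂_X_pow, eval₂_C, hθ]; simp⟩
  have hzint : ∀ q : ℤ, IsIntegral ℤ ((q : ℂ)) := by
    intro q
    have h1 : IsIntegral ℤ ((algebraMap ℤ ℂ) q) := isIntegral_algebraMap
    simpa using h1
  have hpint : Prime (p : ℤ) := Nat.prime_iff_prime_int.mp hp
  -- p does not divide Cm
  have hpCm : ¬ (p : ℤ) ∣ Cm := by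
    intro hdvd
    rw [hCm] at hdvd
    obtain ⟨j0, hj0mem, hj0⟩ := hpint.exists_mem_finset_dvd hdvd
    have h1 : (p : ℤ) ∣ aa j0 := hpint.dvd_of_dvd_pow hj0
    have hj01 : 1 ≤ j0 := (Finset.mem_Ico.mp hj0mem).1
    have h2 : (p : ℤ) ∣ |a| := by
      rw [hfac]
      exact dvd_trans (dvd_trans h1 (dvd_pow_self _ (by omega)))
        (Finset.dvd_prod_of_mem _ hj0mem)
    exact ha ((dvd_abs _ _).mp h2)
  have hCm0 : Cm ≠ 0 := fun h => hpCm (h ▸ dvd_zero _)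
  have hCmC : (Cm : ℂ) ≠ 0 := Int.cast_ne_zero.mpr hCm0
  -- Cm ^ n divides a ^ m
  have hCmdvd : Cm ^ n ∣ a ^ m := by
    have h1 : Cm ^ n = ∏ j ∈ Finset.Ico 1 n, aa j ^ (j * m / n * n) := by
      rw [hCm, ← Finset.prod_pow]
      exact Finset.prod_congr rfl fun j _ => by rw [← pow_mul]
    have h2 : |a| ^ m = ∏ j ∈ Finset.Ico 1 n, aa j ^ (j * m) := by
      rw [hfac, ← Finset.prod_pow]
      exact Finset.prod_congr rfl fun j _ => by rw [← pow_mul]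
    have h3 : Cm ^ n ∣ |a| ^ m := by
      rw [h1, h2]
      exact Finset.prod_dvd_prod_of_dvd _ _ fun j _ =>
        pow_dvd_pow _ (Nat.div_mul_le_self _ _)
    rw [← abs_pow] at h3
    exact (dvd_abs _ _).mp h3
  obtain ⟨d, hd⟩ := hCmdvd
  have hηint : IsIntegral ℤ (θ ^ m / (Cm : ℂ)) := by
    refine ⟨X ^ n - C d, monic_X_pow_sub_C d hn0.ne', ?_⟩
    have h1 : (θ ^ m / (Cm : ℂ)) ^ n = (d : ℂ) := by
      rw [div_pow, ← pow_mul, mul_comm m n, pow_mul, hθ]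
      have h2 : ((a : ℂ)) ^ m = ((Cm : ℂ)) ^ n * (d : ℂ) := by
        exact_mod_cast congrArg (Int.cast : ℤ → ℂ) hd
      rw [h2]
      field_simp
    rw [eval₂_sub, eval₂_X_pow, eval₂_C, h1]; simp
  by_cases hk0 : 0 < km
  swap
  · -- km = 0 case
    have hkm0 : km = 0 := by omega
    rw [hδ, if_neg hk0, hkm0]
    simpa using hηint
  -- main case km ≥ 1
  have hks : km ≤ s := le_trans hkm (min_le_right r s)
  have hkr : km ≤ r := le_trans hkm (min_le_left r s)
  have hpk_dvd : p ^ km ∣ n := dvd_trans (pow_dvd_pow p hks) hps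
  have hP1 : 1 ≤ p ^ km := Nat.one_le_pow _ _ hp.pos
  have hn' : p ^ km * n'm = n := by rw [hn'm]; exact Nat.mul_div_cancel' hpk_dvd
  have hmsplit : m = n'm * (p ^ km - 1) + jm := by
    have h1 : n'm * (p ^ km - 1) + n'm = n := by
      have : n'm * (p ^ km - 1) + n'm = n'm * (p ^ km - 1 + 1) := by ring
      rw [this, Nat.sub_add_cancel hP1, mul_comm, hn']
    have h2 : n / p ^ km = n'm := hn'm.symm
    omega
  have hθm : θ ^ m = θ ^ jm * (θ ^ n'm) ^ (p ^ km - 1) := by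
    rw [hmsplit, pow_add, ← pow_mul, mul_comm]
  -- the congruence  a * a'^(p^km) ≡ 1  mod p^(km+1)
  haveI : Fact p.Prime := ⟨hp⟩
  have hVp : padicValInt p (a ^ (p - 1) - 1) = r + 1 := by omega
  have hpr : (p : ℤ) ^ (r + 1) ∣ a ^ (p - 1) - 1 := by
    rw [← hVp]; exact padicValInt_dvd _
  have hpk1 : (p : ℤ) ^ (km + 1) ∣ a ^ (p - 1) - 1 :=
    dvd_trans (pow_dvd_pow _ (Nat.succ_le_succ hkr)) hpr
  have hmod : a ^ (p - 1) ≡ 1 [ZMOD (p : ℤ) ^ (km + 1)] := by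
    have h1 := dvd_neg.mpr hpk1
    rw [neg_sub] at h1
    exact Int.modEq_iff_dvd.mpr (by simpa [neg_sub] using dvd_neg.mpr hpk1)
  have hEex : ∃ i : ℕ, a' ^ (p ^ km) = b' ^ (p ^ i) := by
    rw [ha']
    split_ifs with h
    · refine ⟨s - 1, ?_⟩
      rw [← pow_mul, ← pow_add]
      congr 2
      omega
    · exact ⟨s, by congr 2; omega⟩
  obtain ⟨iE, hiE⟩ := hEex
  have haE1 : a ^ (p ^ iE - 1) ≡ 1 [ZMOD (p : ℤ) ^ (km + 1)] := by
    obtain ⟨q, hq⟩ := Nat.sub_dvd_pow_sub_pow p 1 iE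
    rw [one_pow] at hq
    rw [hq, pow_mul]
    have h1 := hmod.pow q
    rwa [one_pow] at h1
  have hemod : a * a' ^ (p ^ km) ≡ 1 [ZMOD (p : ℤ) ^ (km + 1)] := by
    have h2 : a ^ (p ^ iE) = a * a ^ (p ^ iE - 1) := by
      conv_lhs =>
        rw [show p ^ iE = (p ^ iE - 1) + 1 from (Nat.succ_pred_eq_of_pos (pow_pos hp.pos iE)).symm]
      rw [pow_succ]; ring
    have h1 : (a * a' ^ (p ^ km)) * a ^ (p ^ iE - 1) = (a * b') ^ (p ^ iE) := by
      rw [hiE, mul_pow, h2]; ring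
    have h3 := hb'.pow (p ^ iE)
    rw [one_pow] at h3
    have h4 : (a * a' ^ (p ^ km)) * a ^ (p ^ iE - 1) ≡ 1 [ZMOD (p : ℤ) ^ (km + 1)] :=
      h1 ▸ h3
    have h5 : (a * a' ^ (p ^ km)) * a ^ (p ^ iE - 1) ≡ (a * a' ^ (p ^ km)) * 1
        [ZMOD (p : ℤ) ^ (km + 1)] := Int.ModEq.mul_left _ haE1
    calc a * a' ^ (p ^ km) = (a * a' ^ (p ^ km)) * 1 := (mul_one _).symm
      _ ≡ (a * a' ^ (p ^ km)) * a ^ (p ^ iE - 1) [ZMOD (p : ℤ) ^ (km + 1)] := h5.symm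
      _ ≡ 1 [ZMOD (p : ℤ) ^ (km + 1)] := h4
  have hedvd : (p : ℤ) ^ (km + 1) ∣ a * a' ^ (p ^ km) - 1 := by
    have h1 := dvd_neg.mpr hemod.dvd
    rwa [neg_sub] at h1
  obtain ⟨y, hy⟩ := hedvd
  -- definitions
  set u : ℂ := (a' : ℂ) * θ ^ n'm with hu
  have hue : u ^ (p ^ km) = ((a * a' ^ (p ^ km) : ℤ) : ℂ) := by
    rw [hu, mul_pow, ← pow_mul, mul_comm n'm (p ^ km), hn', hθ]
    push_cast
    ring
  -- p does not divide b', a', c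
  have hpb' : ¬ (p : ℤ) ∣ b' := by
    intro hdvd
    have h2 : ((p : ℤ) ^ (km + 1)) ∣ 1 - a * b' := hb'.dvd
    have h3 : (p : ℤ) ∣ 1 - a * b' :=
      dvd_trans (dvd_pow_self _ (Nat.succ_ne_zero km)) h2
    have h5 : (p : ℤ) ∣ a * b' := Dvd.dvd.mul_left hdvd a
    have h4 : (p : ℤ) ∣ 1 := by
      have h6 := dvd_add h3 h5
      simpa using h6
    exact hpint.not_dvd_one h4
  have hpa' : ¬ (p : ℤ) ∣ a' := by
    rw [ha']
    split_ifs
    · intro hdvd; exact hpb' (hpint.dvd_of_dvd_pow hdvd)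
    · exact hpb'
  set c : ℤ := Cm * a' ^ (p ^ km - 1) with hc
  have hpc : ¬ (p : ℤ) ∣ c := by
    intro hdvd
    rcases (Prime.dvd_mul hpint).mp (hc ▸ hdvd) with h | h
    · exact hpCm h
    · exact hpa' (hpint.dvd_of_dvd_pow h)
  have hwc_dvd : (p : ℤ) ^ km ∣ w * c - 1 := by
    have h3 := hw.dvd
    have h4 := dvd_neg.mpr h3
    rw [neg_sub] at h4
    have h5 : w * c - 1 = w * Cm * a' ^ (p ^ km - 1) - 1 := by rw [hc]; ring
    rwa [h5]
  obtain ⟨z, hz⟩ := hwc_dvd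
  -- sums
  set S : ℂ := ∑ i ∈ Finset.range (p ^ km), u ^ i with hS
  set S' : ℂ := ∑ i ∈ Finset.range (p ^ km - 1), u ^ i with hS'
  have hSS' : S = S' + u ^ (p ^ km - 1) := by
    rw [hS, hS']
    conv_lhs => rw [show p ^ km = (p ^ km - 1) + 1 from (Nat.succ_pred_eq_of_pos (pow_pos hp.pos km)).symm]
    rw [Finset.sum_range_succ]
  have hδ' : δ = (w : ℂ) * (Cm : ℂ) * θ ^ jm * S' := by rw [hδ, if_pos hk0]
  -- integrality pool
  have huint : IsIntegral ℤ u := by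
    rw [hu]; exact (hzint a').mul (hθint.pow n'm)
  have hS'int : IsIntegral ℤ S' := by
    rw [hS']; exact (integralClosure ℤ ℂ).sum_mem fun i _ => huint.pow i
  -- identities
  have hpC : (p : ℂ) ≠ 0 := Nat.cast_ne_zero.mpr hp.pos.ne'
  have hNE : ((p : ℂ) ^ km * (Cm : ℂ)) ≠ 0 := mul_ne_zero (pow_ne_zero _ hpC) hCmC
  set γ : ℂ := (θ ^ m + δ) / ((p : ℂ) ^ km * (Cm : ℂ)) with hγ
  have hstep1 : γ * ((p : ℂ) ^ km * (Cm : ℂ)) = θ ^ m + δ := div_mul_cancel₀ _ hNE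
  have hID1 : γ * (p : ℂ) ^ km = θ ^ m / (Cm : ℂ) + (w : ℂ) * θ ^ jm * S' := by
    rw [hγ, hδ']
    field_simp
  have hwcC : (w : ℂ) * ((Cm : ℂ) * (a' : ℂ) ^ (p ^ km - 1)) = 1 + (p : ℂ) ^ km * (z : ℂ) := by
    have h1 : w * (Cm * a' ^ (p ^ km - 1)) = 1 + (p : ℤ) ^ km * z := by
      rw [← hc]; linarith [hz]
    have h2 := congrArg (Int.cast : ℤ → ℂ) h1
    push_cast at h2
    exact h2
  have hID2 : γ * ((c : ℤ) : ℂ) * (p : ℂ) ^ km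
      = θ ^ jm * S + (p : ℂ) ^ km * (z : ℂ) * (θ ^ jm * S') := by
    have h2 : ((c : ℤ) : ℂ) = (Cm : ℂ) * (a' : ℂ) ^ (p ^ km - 1) := by
      rw [hc]; push_cast; ring
    have h1 : γ * ((c : ℤ) : ℂ) * (p : ℂ) ^ km = (θ ^ m + δ) * (a' : ℂ) ^ (p ^ km - 1) := by
      calc γ * ((c : ℤ) : ℂ) * (p : ℂ) ^ km
          = γ * ((p : ℂ) ^ km * (Cm : ℂ)) * (a' : ℂ) ^ (p ^ km - 1) := by rw [h2]; ring
        _ = (θ ^ m + δ) * (a' : ℂ) ^ (p ^ km - 1) := by rw [hstep1]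
    rw [h1, hθm, hδ']
    calc (θ ^ jm * (θ ^ n'm) ^ (p ^ km - 1) + (w : ℂ) * (Cm : ℂ) * θ ^ jm * S')
            * (a' : ℂ) ^ (p ^ km - 1)
        = θ ^ jm * ((a' : ℂ) ^ (p ^ km - 1) * (θ ^ n'm) ^ (p ^ km - 1))
            + ((w : ℂ) * ((Cm : ℂ) * (a' : ℂ) ^ (p ^ km - 1))) * (θ ^ jm * S') := by
          ring
      _ = θ ^ jm * u ^ (p ^ km - 1) + (1 + (p : ℂ) ^ km * (z : ℂ)) * (θ ^ jm * S') := by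
          rw [hu, ← mul_pow, hwcC]
      _ = θ ^ jm * (S' + u ^ (p ^ km - 1)) + (p : ℂ) ^ km * (z : ℂ) * (θ ^ jm * S') := by ring
      _ = θ ^ jm * S + (p : ℂ) ^ km * (z : ℂ) * (θ ^ jm * S') := by rw [← hSS']
  -- valuation argument
  apply isIntegral_of_forall_mem_valuationSubring'
  intro V
  rw [← V.valuation_le_one_iff]
  set v := V.valuation with hv
  have hvint : ∀ x : ℂ, IsIntegral ℤ x → v x ≤ 1 := by
    intro x hx
    have h1 : IsIntegral V.valuation.integer x := hx.tower_top
    exact (Valuation.integer.integers (v := V.valuation)).mem_of_integral h1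
  have hvp_le : v ((p : ℕ) : ℂ) ≤ 1 := by
    have h0 : ((p : ℕ) : ℂ) = (((p : ℤ)) : ℂ) := by push_cast; ring
    rw [h0]; exact hvint _ (hzint p)
  rcases le_or_gt 1 (v ((p : ℕ) : ℂ)) with hvp | hvp
  · -- v p = 1
    have hvp1 : v ((p : ℕ) : ℂ) = 1 := le_antisymm hvp_le hvp
    have h1 : v γ * (v ((p : ℕ) : ℂ)) ^ km = v (θ ^ m / (Cm : ℂ) + (w : ℂ) * θ ^ jm * S') := by
      rw [← map_pow, ← map_mul, hID1]
    have h2 : v (θ ^ m / (Cm : ℂ) + (w : ℂ) * θ ^ jm * S') ≤ 1 := by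
      refine le_trans (v.map_add _ _) (max_le (hvint _ hηint) (hvint _ ?_))
      exact ((hzint w).mul (hθint.pow jm)).mul hS'int
    rw [hvp1, one_pow, mul_one] at h1
    rw [h1]
    exact h2
  · -- v p < 1
    have hvpne : v ((p : ℕ) : ℂ) ≠ 0 := v.ne_zero_iff.mpr hpC
    have hvc : v ((c : ℤ) : ℂ) = 1 := by
      obtain ⟨x0, y0, hxy⟩ := (hpint.coprime_iff_not_dvd).mpr hpc
      have hcast : (x0 : ℂ) * ((p : ℕ) : ℂ) + (y0 : ℂ) * ((c : ℤ) : ℂ) = 1 := by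
        have := congrArg (Int.cast : ℤ → ℂ) hxy
        push_cast at this
        convert this using 2 <;> push_cast <;> ring
      have h1 : v ((x0 : ℂ) * ((p : ℕ) : ℂ)) < 1 := by
        rw [map_mul]
        calc v (x0 : ℂ) * v ((p : ℕ) : ℂ) ≤ 1 * v ((p : ℕ) : ℂ) :=
              mul_le_mul_left (hvint _ (hzint x0)) _
          _ = v ((p : ℕ) : ℂ) := one_mul _
          _ < 1 := hvp
      have h2 : v ((y0 : ℂ) * ((c : ℤ) : ℂ)) = 1 := by
        have h3 : (y0 : ℂ) * ((c : ℤ) : ℂ) = 1 - (x0 : ℂ) * ((p : ℕ) : ℂ) := by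
          linear_combination hcast
        rw [h3, v.map_one_sub_of_lt h1]
      rw [map_mul] at h2
      have h4 : v ((c : ℤ) : ℂ) ≤ 1 := hvint _ (hzint c)
      have h5 : v (y0 : ℂ) ≤ 1 := hvint _ (hzint y0)
      have h6 : (1 : _) ≤ v ((c : ℤ) : ℂ) := by
        calc (1 : _) = v (y0 : ℂ) * v ((c : ℤ) : ℂ) := h2.symm
          _ ≤ 1 * v ((c : ℤ) : ℂ) := mul_le_mul_left h5 _
          _ = v ((c : ℤ) : ℂ) := one_mul _
      exact le_antisymm h4 h6
    have hvS : v S ≤ (v ((p : ℕ) : ℂ)) ^ km := by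
      rcases le_total (v (u - 1)) (v ((p : ℕ) : ℂ)) with hcase | hcase
      · rw [hS]; exact val_geom_sum_le_of_le v p u huint hvint hcase km
      · by_cases hu1 : u = 1
        · rw [hS, hu1]
          have h1 : ∑ i ∈ Finset.range (p ^ km), (1 : ℂ) ^ i = ((p : ℕ) : ℂ) ^ km := by
            push_cast
            simp
          rw [h1, map_pow]
        · have hune : v (u - 1) ≠ 0 := v.ne_zero_iff.mpr (sub_ne_zero.mpr hu1)
          have h1 : v S * v (u - 1) = (v ((p : ℕ) : ℂ)) ^ (km + 1) * v ((y : ℤ) : ℂ) := by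
            rw [← map_mul]
            have h2 : S * (u - 1) = ((p : ℕ) : ℂ) ^ (km + 1) * ((y : ℤ) : ℂ) := by
              rw [hS, geom_sum_mul, hue]
              have h3 := congrArg (Int.cast : ℤ → ℂ) hy
              push_cast at h3 ⊢
              linear_combination h3
            rw [h2, map_mul, map_pow]
          have h4 : v S * v (u - 1) ≤ ((v ((p : ℕ) : ℂ)) ^ km) * v (u - 1) := by
            rw [h1, pow_succ]
            calc (v ((p : ℕ) : ℂ) ^ km * v ((p : ℕ) : ℂ)) * v ((y : ℤ) : ℂ)
                ≤ (v ((p : ℕ) : ℂ) ^ km * v ((p : ℕ) : ℂ)) * 1 :=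
                  mul_le_mul_right (hvint _ (hzint y)) _
              _ = v ((p : ℕ) : ℂ) ^ km * v ((p : ℕ) : ℂ) := mul_one _
              _ ≤ v ((p : ℕ) : ℂ) ^ km * v (u - 1) := mul_le_mul_right hcase _
          exact le_of_mul_le_mul_right h4 (zero_lt_iff.mpr hune)
    -- conclude
    have h1 : v γ * ((v ((c : ℤ) : ℂ)) * (v ((p : ℕ) : ℂ)) ^ km)
        = v (θ ^ jm * S + (p : ℂ) ^ km * (z : ℂ) * (θ ^ jm * S')) := by
      rw [← map_pow, ← map_mul, ← map_mul, ← mul_assoc, hID2]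
    rw [hvc, one_mul] at h1
    have h2 : v (θ ^ jm * S + (p : ℂ) ^ km * (z : ℂ) * (θ ^ jm * S'))
        ≤ (v ((p : ℕ) : ℂ)) ^ km := by
      refine le_trans (v.map_add _ _) (max_le ?_ ?_)
      · rw [map_mul]
        calc v (θ ^ jm) * v S ≤ 1 * (v ((p : ℕ) : ℂ)) ^ km :=
              mul_le_mul' (hvint _ (hθint.pow jm)) hvS
          _ = _ := one_mul _
      · rw [map_mul, map_mul, map_pow]
        calc v ((p : ℕ) : ℂ) ^ km * v ((z : ℤ) : ℂ) * v (θ ^ jm * S')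
            ≤ v ((p : ℕ) : ℂ) ^ km * 1 * 1 :=
              mul_le_mul' (mul_le_mul' le_rfl (hvint _ (hzint z)))
                (hvint _ ((hθint.pow jm).mul hS'int))
          _ = v ((p : ℕ) : ℂ) ^ km := by rw [mul_one, mul_one]
    have h3 : v γ * (v ((p : ℕ) : ℂ)) ^ km ≤ 1 * (v ((p : ℕ) : ℂ)) ^ km := by
      rw [h1, one_mul]
      exact h2
    exact le_of_mul_le_mul_right h3 (zero_lt_iff.mpr (pow_ne_zero _ hvpne))
end
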